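/- Let V: ℝ_{≥0} × ℝ^n → ℝ be continuously differentiable and suppose there exist constants 0 < a_lo ≤ a_hi, b > 0, b₀ > 0 such that a_lo‖x‖² ≤ V(t,x) ≤ a_hi‖x‖² for all (t,x), and along any solution x(t) of ẋ = f(t,x,u), (d/dt)V(t,x(t)) ≤ -b·V(t,x(t)) holds almost everywhere whenever ‖x(t)‖ ≥ b₀. Then every solution satisfies ‖x(t)‖ ≤ √(a_hi/a_lo)·(‖x(t₀)‖e^{-(b/2)(t-t₀)} + b₀) for all t ≥ t₀. -/

import Mathlib

open MeasureTheory Set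

lemma aux_exists_lipschitzOnWith_Icc {g : ℝ → ℝ} (hg : LocallyLipschitz g) (a b : ℝ) :
    ∃ K : NNReal, LipschitzOnWith K g (Set.Icc a b) := by
  rcases le_or_gt b a with hba | hab
  · rcases eq_or_lt_of_le hba with rfl | h
    · exact ⟨1, by
        rw [lipschitzOnWith_iff_dist_le_mul]
        intro u hu v hv
        have : u = v := le_antisymm (hu.2.trans hv.1) (hv.2.trans hu.1)
        simp [this]⟩
    · refine ⟨1, ?_⟩
      rw [Set.Icc_eq_empty (not_le.2 h)]
      exact lipschitzOnWith_empty _ _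
  set S : Set ℝ := {c | c ∈ Set.Icc a b ∧ ∃ K : NNReal, LipschitzOnWith K g (Set.Icc a c)}
  have haS : a ∈ S := by
    refine ⟨⟨le_rfl, hab.le⟩, 1, ?_⟩
    rw [lipschitzOnWith_iff_dist_le_mul]
    intro u hu v hv
    have : u = v := le_antisymm (hu.2.trans hv.1) (hv.2.trans hu.1)
    simp [this]
  have hSne : S.Nonempty := ⟨a, haS⟩
  have hSbdd : BddAbove S := ⟨b, fun c hc => hc.1.2⟩
  set c' := sSup S with hc'
  have hc'mem : a ≤ c' ∧ c' ≤ b := ⟨le_csSup hSbdd haS, csSup_le hSne fun c hc => hc.1.2⟩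
  obtain ⟨K₀, U, hU, hK₀⟩ := hg c'
  obtain ⟨ε', hε', hball⟩ := Metric.mem_nhds_iff.1 hU
  set ε := ε' / 2 with hε
  have hεpos : 0 < ε := by positivity
  have hIccU : Set.Icc (c' - ε) (c' + ε) ⊆ U := by
    intro u hu
    apply hball
    rw [Metric.mem_ball, Real.dist_eq, abs_lt]
    constructor <;> [linarith [hu.1]; linarith [hu.2]]
  obtain ⟨c, hcS, hcgt⟩ := exists_lt_of_lt_csSup hSne (by linarith : c' - ε < c')
  obtain ⟨⟨hac, hcb⟩, K, hK⟩ := hcS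
  have hcle : c ≤ c' := le_csSup hSbdd ⟨⟨hac, hcb⟩, K, hK⟩
  set m := min b (c' + ε) with hm
  have hmS : m ∈ S := by
    refine ⟨⟨le_trans hc'mem.1 (le_min hc'mem.2 (by linarith [hc'mem.1])), min_le_left _ _⟩,
      K + K₀, ?_⟩
    rw [lipschitzOnWith_iff_dist_le_mul]
    have key : ∀ u v : ℝ, u ∈ Set.Icc a m → v ∈ Set.Icc a m → u ≤ v →
        dist (g u) (g v) ≤ (K + K₀ : NNReal) * dist u v := by
      intro u v hu hv huv
      have hdK := lipschitzOnWith_iff_dist_le_mul.1 hK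
      have hdK₀ := lipschitzOnWith_iff_dist_le_mul.1 (hK₀.mono hIccU)
      have hvm : v ≤ c' + ε := le_trans hv.2 (min_le_right _ _)
      push_cast
      rcases le_or_gt v c with hvc | hvc
      · calc dist (g u) (g v) ≤ K * dist u v := hdK u ⟨hu.1, huv.trans hvc⟩ v ⟨hv.1, hvc⟩
          _ ≤ (K + K₀) * dist u v :=
              mul_le_mul_of_nonneg_right (by nlinarith [NNReal.coe_nonneg K₀]) dist_nonneg
      · rcases lt_or_ge (c' - ε) u with huc | huc
        · exact le_trans (hdK₀ u ⟨huc.le, by linarith [hu.2, min_le_right b (c' + ε)]⟩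
            v ⟨by linarith, hvm⟩) (by
              have h0 := dist_nonneg (x := u) (y := v)
              nlinarith [NNReal.coe_nonneg K])
        · have hucc : u ≤ c := by linarith
          have h1 : dist (g u) (g c) ≤ K * dist u c := hdK u ⟨hu.1, hucc⟩ c ⟨hac, le_rfl⟩
          have h2 : dist (g c) (g v) ≤ K₀ * dist c v :=
            hdK₀ c ⟨hcgt.le, by linarith⟩ v ⟨by linarith, hvm⟩
          have hd1 : dist u c = c - u := by rw [Real.dist_eq, abs_of_nonpos (by linarith)]; ring
          have hd2 : dist c v = v - c := by rw [Real.dist_eq, abs_of_nonpos (by linarith)]; ring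
          have hd3 : dist u v = v - u := by rw [Real.dist_eq, abs_of_nonpos (by linarith)]; ring
          calc dist (g u) (g v) ≤ dist (g u) (g c) + dist (g c) (g v) := dist_triangle _ _ _
            _ ≤ K * dist u c + K₀ * dist c v := add_le_add h1 h2
            _ ≤ (K + K₀) * dist u v := by
                rw [hd1, hd2, hd3]
                nlinarith [NNReal.coe_nonneg K, NNReal.coe_nonneg K₀]
    intro u hu v hv
    rcases le_total u v with h | h
    · exact key u v hu hv h
    · rw [dist_comm, dist_comm u v]; exact key v u hv hu h
  have hmle : m ≤ c' := le_csSup hSbdd hmS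
  have hbc' : b ≤ c' := by
    by_contra hcb'
    push_neg at hcb'
    have : c' < m := lt_min hcb' (by linarith)
    linarith
  have hmb : m = b := by
    rw [hm]
    exact min_eq_left (by linarith)
  obtain ⟨_, K', hK'⟩ := hmS
  exact ⟨K', by rwa [hmb] at hK'⟩

lemma aux_ae_differentiableAt {g : ℝ → ℝ} (hg : LocallyLipschitz g) :
    ∀ᵐ t ∂(volume : Measure ℝ), DifferentiableAt ℝ g t := by
  have H : ∀ n : ℕ, ∀ᵐ t ∂(volume : Measure ℝ),
      t ∈ Set.Ioo (-(n:ℝ)) n → DifferentiableAt ℝ g t := by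
    intro n
    obtain ⟨K, hK⟩ := aux_exists_lipschitzOnWith_Icc hg (-(n:ℝ)) n
    filter_upwards [hK.ae_differentiableWithinAt_of_mem_real] with t ht hmem
    exact (ht (Set.Ioo_subset_Icc_self hmem)).differentiableAt
      (Icc_mem_nhds hmem.1 hmem.2)
  filter_upwards [ae_all_iff.2 H] with t ht
  obtain ⟨n, hn⟩ := exists_nat_gt |t| 
  exact ht n ⟨by linarith [abs_lt.1 hn |>.1], (abs_lt.1 hn).2⟩

noncomputable def auxSF {g : ℝ → ℝ} {L : NNReal} (hg : LipschitzWith L g) :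
    StieltjesFunction ℝ where
  toFun := fun t => L * t - g t
  mono' := by
    intro s t hst
    have h0 := hg.dist_le_mul s t
    rw [Real.dist_eq, Real.dist_eq] at h0
    have h1 : g t - g s ≤ L * (t - s) := by
      calc g t - g s ≤ |g t - g s| := le_abs_self _
        _ = |g s - g t| := abs_sub_comm _ _
        _ ≤ L * |s - t| := h0
        _ = L * (t - s) := by rw [abs_of_nonpos (by linarith)]; ring
    simp only
    linarith
  right_continuous' := fun xx =>
    ((continuous_const.mul continuous_id).sub hg.continuous).continuousWithinAt

set_option maxHeartbeats 1000000 in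
lemma aux_lipschitz_decay {g : ℝ → ℝ} {L : NNReal} (hg : LipschitzWith L g) {a b : ℝ}
    (hab : a ≤ b) (hd : ∀ᵐ t ∂(volume : Measure ℝ), t ∈ Set.Ioo a b → deriv g t ≤ 0) :
    g b ≤ g a := by
  set H : StieltjesFunction ℝ := auxSF hg with hH
  have hcoe : ∀ t, H t = L * t - g t := fun t => rfl
  have hae := H.ae_hasDerivAt
  set d : ℝ → ℝ := fun t => (H.measure.rnDeriv volume t).toReal with hd'
  -- a.e. on Ioo a b, L ≤ rnDeriv
  have hge : ∀ᵐ t ∂(volume : Measure ℝ), t ∈ Set.Ioo a b →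
      (L : ENNReal) ≤ H.measure.rnDeriv volume t := by
    filter_upwards [hae, hd] with t ht hdt htab
    rcases eq_or_ne (H.measure.rnDeriv volume t) ⊤ with h | h
    · simp [h]
    · have hgt : HasDerivAt g ((L : ℝ) - d t) t := by
        have h1 : HasDerivAt (fun u : ℝ => (L : ℝ) * u) (L : ℝ) t := by
          simpa using (hasDerivAt_id t).const_mul (L : ℝ)
        have h2 := h1.sub ht
        have : g = fun u => (L : ℝ) * u - H u := by
          funext u; rw [hcoe]; ring
        rw [this]
        exact h2
      have : deriv g t = (L : ℝ) - d t := hgt.deriv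
      have hLd : (L : ℝ) ≤ d t := by
        have h1 := hdt htab
        rw [this] at h1
        linarith
      rw [hd'] at hLd
      rw [← ENNReal.ofReal_toReal h, ← ENNReal.ofReal_coe_nnreal]
      exact ENNReal.ofReal_le_ofReal hLd
  -- integrate over Ioo a b
  have hIoo : MeasurableSet (Set.Ioo a b) := measurableSet_Ioo
  have h1 : (L : ENNReal) * volume (Set.Ioo a b) ≤
      ∫⁻ t in Set.Ioo a b, H.measure.rnDeriv volume t ∂volume := by
    rw [← setLIntegral_const]
    refine setLIntegral_mono_ae (H.measure.measurable_rnDeriv volume).aemeasurable ?_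
    exact hge
  have h2a : ∫⁻ t in Set.Ioo a b, H.measure.rnDeriv volume t ∂volume ≤
      ∫⁻ t in Set.Ioc a b, H.measure.rnDeriv volume t ∂volume :=
    lintegral_mono_set Set.Ioo_subset_Ioc_self
  have h2b : ∫⁻ t in Set.Ioc a b, H.measure.rnDeriv volume t ∂volume ≤
      H.measure (Set.Ioc a b) := Measure.setLIntegral_rnDeriv_le _
  have h3 : H.measure (Set.Ioc a b) = ENNReal.ofReal (H b - H a) := H.measure_Ioc a b
  have h4 : (L : ENNReal) * volume (Set.Ioo a b) = ENNReal.ofReal (L * (b - a)) := by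
    rw [Real.volume_Ioo, ← ENNReal.ofReal_coe_nnreal, ← ENNReal.ofReal_mul (by positivity)]
  have h5 : ENNReal.ofReal ((L : ℝ) * (b - a)) ≤ ENNReal.ofReal (H b - H a) :=
    h4 ▸ (h1.trans (h2a.trans (h2b.trans h3.le)))
  have h6 : (L : ℝ) * (b - a) ≤ H b - H a := by
    have hHab : H a ≤ H b := H.mono hab
    rcases le_or_gt ((L : ℝ) * (b - a)) 0 with h | h
    · linarith
    · exact (ENNReal.ofReal_le_ofReal_iff (by linarith)).1 h5
  rw [hcoe, hcoe] at h6
  linarith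

lemma aux_locallyLipschitz_decay {g : ℝ → ℝ} (hg : LocallyLipschitz g) {a b : ℝ}
    (hab : a ≤ b) (hd : ∀ᵐ t ∂(volume : Measure ℝ), t ∈ Set.Ioo a b → deriv g t ≤ 0) :
    g b ≤ g a := by
  obtain ⟨K, hK⟩ := aux_exists_lipschitzOnWith_Icc hg a b
  set cl : ℝ → ℝ := fun t => max a (min t b) with hcl
  have hclmem : ∀ t, cl t ∈ Set.Icc a b :=
    fun t => ⟨le_max_left _ _, max_le hab (min_le_right _ _)⟩
  have hcl1 : ∀ s t, dist (cl s) (cl t) ≤ dist s t := by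
    intro s t
    simp only [hcl, Real.dist_eq]
    have h1 : |max a (min s b) - max a (min t b)| ≤ |min s b - min t b| := by
      rw [max_comm a _, max_comm a _]
      exact abs_max_sub_max_le_abs _ _ _
    have h2 : |min s b - min t b| ≤ |s - t| := by
      have := abs_min_sub_min_le_max s b t b
      simpa using this
    exact h1.trans h2
  set g' : ℝ → ℝ := fun t => g (cl t) with hg'
  have hLip : LipschitzWith K g' := by
    rw [lipschitzWith_iff_dist_le_mul]
    intro s t
    calc dist (g' s) (g' t) ≤ K * dist (cl s) (cl t) :=
          (lipschitzOnWith_iff_dist_le_mul.1 hK) _ (hclmem s) _ (hclmem t)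
      _ ≤ K * dist s t := mul_le_mul_of_nonneg_left (hcl1 s t) K.2
  have heq : ∀ t ∈ Set.Ioo a b, deriv g' t = deriv g t := by
    intro t ht
    apply Filter.EventuallyEq.deriv_eq
    filter_upwards [Ioo_mem_nhds ht.1 ht.2] with u hu
    simp only [hg', hcl, min_eq_left hu.2.le, max_eq_right hu.1.le]
  have hd' : ∀ᵐ t ∂(volume : Measure ℝ), t ∈ Set.Ioo a b → deriv g' t ≤ 0 := by
    filter_upwards [hd] with t ht hmem
    rw [heq t hmem]; exact ht hmem
  have := aux_lipschitz_decay hLip hab hd'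
  simpa only [hg', hcl, min_eq_left hab, max_eq_right hab, min_self, max_self,
    min_eq_right hab, max_eq_left hab] using this

set_option maxHeartbeats 1000000 in
/-- Comparison-lemma / ISS-style bound: if `a_lo‖x‖² ≤ V(t,x) ≤ a_hi‖x‖²` and,
along the (locally Lipschitz) solution `x(t)`, `(d/dt)V(t,x(t)) ≤ -b V(t,x(t))`
holds almost everywhere whenever `‖x(t)‖ ≥ b₀`, then
`‖x(t)‖ ≤ √(a_hi/a_lo)(‖x(t₀)‖ e^{-(b/2)(t-t₀)} + b₀)` for all `t ≥ t₀`. -/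
theorem stmt_11 {n : ℕ}
    (V : ℝ → EuclideanSpace ℝ (Fin n) → ℝ)
    (x : ℝ → EuclideanSpace ℝ (Fin n))
    (alo ahi b b₀ t₀ : ℝ)
    (halo : 0 < alo) (hle : alo ≤ ahi) (hb : 0 < b) (hb₀ : 0 < b₀)
    -- V is continuously differentiable
    (hV : ContDiff ℝ 1 (Function.uncurry V))
    -- the solution is locally Lipschitz (absolutely continuous)
    (hx : LocallyLipschitz x)
    (hbound : ∀ t y, alo * ‖y‖ ^ 2 ≤ V t y ∧ V t y ≤ ahi * ‖y‖ ^ 2)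
    -- decay of V along the solution, almost everywhere, whenever ‖x(t)‖ ≥ b₀
    (hdecay : ∀ᵐ t ∂(volume : Measure ℝ), t₀ ≤ t → b₀ ≤ ‖x t‖ →
      deriv (fun s => V s (x s)) t ≤ -b * V t (x t)) :
    ∀ t ≥ t₀, ‖x t‖ ≤
      Real.sqrt (ahi / alo) *
        (‖x t₀‖ * Real.exp (-(b / 2) * (t - t₀)) + b₀) := by
  have hahi : 0 < ahi := lt_of_lt_of_le halo hle
  set W : ℝ → ℝ := fun s => V s (x s) with hWdef
  have hW : LocallyLipschitz W := by
    have h1 : LocallyLipschitz (Function.uncurry V) := hV.locallyLipschitz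
    have h2 : LocallyLipschitz (fun t : ℝ => (t, x t)) := LocallyLipschitz.id.prodMk hx
    exact h1.comp h2
  set c : ℝ := ahi * b₀ ^ 2 with hc
  have hcpos : 0 < c := by positivity
  set G : ℝ → ℝ := fun s => W s * Real.exp (b * s) with hGdef
  have hG : LocallyLipschitz G := by
    have hexp : LocallyLipschitz (fun s : ℝ => Real.exp (b * s)) := by
      exact ContDiff.locallyLipschitz (𝕂 := ℝ)
        (Real.contDiff_exp.comp (contDiff_const.mul contDiff_id))
    have hprod : LocallyLipschitz (fun s : ℝ => (W s, Real.exp (b * s))) := hW.prodMk hexp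
    have hmul : LocallyLipschitz (fun p : ℝ × ℝ => p.1 * p.2) := by
      exact ContDiff.locallyLipschitz (𝕂 := ℝ) (contDiff_fst.mul contDiff_snd)
    exact hmul.comp hprod
  -- key claim
  have key : ∀ t ≥ t₀, G t ≤ max (G t₀) (c * Real.exp (b * t)) := by
    intro t₁ ht₁
    by_contra hcon
    push_neg at hcon
    set S : Set ℝ := {s | s ∈ Set.Icc t₀ t₁ ∧ G s ≤ max (G t₀) (c * Real.exp (b * s))} with hS
    have ht₀S : t₀ ∈ S := ⟨⟨le_rfl, ht₁⟩, le_max_left _ _⟩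
    have hSne : S.Nonempty := ⟨t₀, ht₀S⟩
    have hSbdd : BddAbove S := ⟨t₁, fun s hs => hs.1.2⟩
    have hSclosed : IsClosed S := by
      apply IsClosed.inter isClosed_Icc
      apply isClosed_le hG.continuous
      exact continuous_const.max (continuous_const.mul (Real.continuous_exp.comp
        (continuous_const.mul continuous_id)))
    set s₁ := sSup S with hs₁
    have hs₁S : s₁ ∈ S := hSclosed.csSup_mem hSne hSbdd
    have hs₁le : s₁ ≤ t₁ := hs₁S.1.2
    have ht₁S : t₁ ∉ S := fun h => absurd h.2 (not_le.2 hcon)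
    have hs₁lt : s₁ < t₁ := lt_of_le_of_ne hs₁le (fun h => ht₁S (h ▸ hs₁S))
    -- all points in Ioo s₁ t₁ violate the bound
    have hviol : ∀ u ∈ Set.Ioo s₁ t₁, b₀ ≤ ‖x u‖ := by
      intro u hu
      have huS : u ∉ S := fun h => absurd (le_csSup hSbdd h) (not_le.2 hu.1)
      have humem : u ∈ Set.Icc t₀ t₁ := ⟨le_trans hs₁S.1.1 hu.1.le, hu.2.le⟩
      have hGu : max (G t₀) (c * Real.exp (b * u)) < G u := by
        by_contra h
        exact huS ⟨humem, not_lt.1 h⟩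
      have hcu : c * Real.exp (b * u) < W u * Real.exp (b * u) :=
        lt_of_le_of_lt (le_max_right _ _) hGu
      have hWu : c < W u := by
        have he := Real.exp_pos (b * u)
        exact lt_of_mul_lt_mul_right (by linarith) he.le
      have hWb : W u ≤ ahi * ‖x u‖ ^ 2 := (hbound u (x u)).2
      have : b₀ ^ 2 < ‖x u‖ ^ 2 := by
        rw [hc] at hWu
        nlinarith
      by_contra hcon2
      push_neg at hcon2
      nlinarith [norm_nonneg (x u)]
    -- derivative of G is nonpositive a.e. on Ioo s₁ t₁
    have hdG : ∀ᵐ u ∂(volume : Measure ℝ), u ∈ Set.Ioo s₁ t₁ → deriv G u ≤ 0 := by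
      filter_upwards [hdecay, aux_ae_differentiableAt hW] with u hdec hdiff hu
      have ht₀u : t₀ ≤ u := le_trans hs₁S.1.1 hu.1.le
      have hder : deriv W u ≤ -b * W u := hdec ht₀u (hviol u hu)
      have hexp : HasDerivAt (fun s : ℝ => Real.exp (b * s)) (Real.exp (b * u) * (b * 1)) u := by
        exact HasDerivAt.exp ((hasDerivAt_id u).const_mul b)
      have hGd : HasDerivAt G (deriv W u * Real.exp (b * u) +
          W u * (Real.exp (b * u) * (b * 1))) u := hdiff.hasDerivAt.mul hexp
      rw [hGd.deriv]
      have he := Real.exp_pos (b * u)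
      nlinarith
    have hdecG : G t₁ ≤ G s₁ := aux_locallyLipschitz_decay hG hs₁lt.le hdG
    have hmono : max (G t₀) (c * Real.exp (b * s₁)) ≤ max (G t₀) (c * Real.exp (b * t₁)) := by
      apply max_le_max le_rfl
      exact mul_le_mul_of_nonneg_left (Real.exp_le_exp.2 (by nlinarith)) hcpos.le
    linarith [hs₁S.2, hcon]
  -- conclude
  intro t ht
  have hkey := key t ht
  set τ := t - t₀ with hτ
  have hτ0 : 0 ≤ τ := by linarith
  have hWt : W t * Real.exp (b * t) ≤ max (W t₀ * Real.exp (b * t₀)) (c * Real.exp (b * t)) :=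
    hkey
  have hW0 : 0 ≤ W t₀ := le_trans (by positivity) (hbound t₀ (x t₀)).1
  have hstep : W t ≤ W t₀ * Real.exp (-b * τ) + c := by
    have hept := Real.exp_pos (b * t)
    rcases le_total (W t₀ * Real.exp (b * t₀)) (c * Real.exp (b * t)) with h | h
    · rw [max_eq_right h] at hWt
      have hWtc : W t ≤ c := le_of_mul_le_mul_right hWt hept
      nlinarith [Real.exp_pos (-b * τ)]
    · rw [max_eq_left h] at hWt
      have h2 : W t ≤ W t₀ * Real.exp (b * t₀) / Real.exp (b * t) := by
        rw [le_div_iff₀ hept]; exact hWt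
      have h3 : Real.exp (b * t₀) / Real.exp (b * t) = Real.exp (-b * τ) := by
        rw [← Real.exp_sub]; congr 1; ring
      rw [div_eq_mul_inv, mul_assoc, ← div_eq_mul_inv, h3] at h2
      linarith
  have hlow : alo * ‖x t‖ ^ 2 ≤ W t := (hbound t (x t)).1
  have hupp : W t₀ ≤ ahi * ‖x t₀‖ ^ 2 := (hbound t₀ (x t₀)).2
  set A := ‖x t₀‖ * Real.exp (-(b / 2) * τ) with hA
  have hA0 : 0 ≤ A := by positivity
  have hA2 : A ^ 2 = ‖x t₀‖ ^ 2 * Real.exp (-b * τ) := by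
    have he : Real.exp (-(b / 2) * τ) ^ 2 = Real.exp (-b * τ) := by
      rw [sq, ← Real.exp_add]; ring_nf
    rw [hA, mul_pow, he]
  set R := Real.sqrt (ahi / alo) * (A + b₀) with hR
  have hR0 : 0 ≤ R := by positivity
  have hsq : Real.sqrt (ahi / alo) ^ 2 = ahi / alo := Real.sq_sqrt (by positivity)
  have hfin : ‖x t‖ ^ 2 ≤ R ^ 2 := by
    have hexpτ := Real.exp_pos (-b * τ)
    have h1 : alo * ‖x t‖ ^ 2 ≤ ahi * ‖x t₀‖ ^ 2 * Real.exp (-b * τ) + ahi * b₀ ^ 2 := by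
      calc alo * ‖x t‖ ^ 2 ≤ W t := hlow
        _ ≤ W t₀ * Real.exp (-b * τ) + c := hstep
        _ ≤ ahi * ‖x t₀‖ ^ 2 * Real.exp (-b * τ) + ahi * b₀ ^ 2 := by
            rw [hc]; nlinarith
    have h2 : R ^ 2 = ahi / alo * (A + b₀) ^ 2 := by rw [hR, mul_pow, hsq]
    rw [h2]
    rw [div_mul_eq_mul_div, le_div_iff₀ halo]
    have hexpand : ahi * (A + b₀) ^ 2 = ahi * A ^ 2 + 2 * ahi * A * b₀ + ahi * b₀ ^ 2 := by ring
    have h3 : ahi * A ^ 2 = ahi * ‖x t₀‖ ^ 2 * Real.exp (-b * τ) := by rw [hA2]; ring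
    have h4 : 0 ≤ 2 * ahi * A * b₀ := by positivity
    linarith
  calc ‖x t‖ = Real.sqrt (‖x t‖ ^ 2) := by rw [Real.sqrt_sq (norm_nonneg _)]
    _ ≤ Real.sqrt (R ^ 2) := Real.sqrt_le_sqrt hfin
    _ = R := Real.sqrt_sq hR0
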